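/- Let G = SL(3,ℤ). Then for every finite generating set S of G, every nonprincipal ultrafilter ω on ℕ, and every unbounded nondecreasing sequence (d_n) of positive real numbers, the kernel of the natural action of G on the asymptotic cone Cone_ω(G,d_n) is trivial: for every g ≠ 1 in G there exists a sequence (x_n) in G with (‖x_n‖_S/d_n) bounded such that ‖x_n⁻¹ g x_n‖_S/d_n does not converge to 0 along ω. Moreover, every nonidentity element of SL(3,ℤ) has an infinite conjugacy class (FC(SL(3,ℤ)) = 1), and SL(3,ℤ) has no nontrivial finite normal subgroup (K(SL(3,ℤ)) = 1). -/

import Mathlib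

open Filter

/-- The word length of `g` with respect to a generating set `S`. -/
noncomputable def wordLength {G : Type*} [Group G] (S : Set G) (g : G) : ℕ :=
  sInf {n | ∃ l : List G, (∀ x ∈ l, x ∈ S ∨ x⁻¹ ∈ S) ∧ l.length = n ∧ l.prod = g}

abbrev SL3 : Type := Matrix.SpecialLinearGroup (Fin 3) ℤ

namespace SL3aux

/-! ### Generic word-length lemmas -/

variable {G : Type*} [Group G] {S : Set G}

lemma exists_word (h : Subgroup.closure S = ⊤) (g : G) :
    ∃ l : List G, (∀ x ∈ l, x ∈ S ∨ x⁻¹ ∈ S) ∧ l.prod = g := by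
  have hg : g ∈ Subgroup.closure S := h ▸ Subgroup.mem_top g
  induction hg using Subgroup.closure_induction with
  | mem x hx => exact ⟨[x], by simp [hx]⟩
  | one => exact ⟨[], by simp⟩
  | mul a b _ _ ha hb =>
      obtain ⟨l1, h1, h1p⟩ := ha; obtain ⟨l2, h2, h2p⟩ := hb
      exact ⟨l1 ++ l2, by
        intro x hx; rcases List.mem_append.1 hx with h|h
        exacts [h1 x h, h2 x h], by simp [h1p, h2p]⟩
  | inv a _ ha =>
      obtain ⟨l, hl, hp⟩ := ha
      refine ⟨(l.map (fun x => x⁻¹)).reverse, ?_, ?_⟩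
      · intro x hx
        simp only [List.mem_reverse, List.mem_map] at hx
        obtain ⟨y, hy, rfl⟩ := hx
        rcases hl y hy with h|h
        · exact Or.inr (by simpa using h)
        · exact Or.inl h
      · rw [← hp]; exact (List.prod_inv_reverse l).symm

lemma wl_le {l : List G} (hl : ∀ x ∈ l, x ∈ S ∨ x⁻¹ ∈ S) :
    wordLength S l.prod ≤ l.length :=
  Nat.sInf_le ⟨l, hl, rfl, rfl⟩

lemma wl_spec (h : Subgroup.closure S = ⊤) (g : G) :
    ∃ l : List G, (∀ x ∈ l, x ∈ S ∨ x⁻¹ ∈ S) ∧ l.length = wordLength S g ∧ l.prod = g := by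
  have hne : {n | ∃ l : List G, (∀ x ∈ l, x ∈ S ∨ x⁻¹ ∈ S) ∧ l.length = n ∧ l.prod = g}.Nonempty := by
    obtain ⟨l, hl, hp⟩ := exists_word h g
    exact ⟨l.length, l, hl, rfl, hp⟩
  exact Nat.sInf_mem hne

lemma wl_mul (h : Subgroup.closure S = ⊤) (g₁ g₂ : G) :
    wordLength S (g₁ * g₂) ≤ wordLength S g₁ + wordLength S g₂ := by
  obtain ⟨l1, h1, hlen1, hp1⟩ := wl_spec h g₁
  obtain ⟨l2, h2, hlen2, hp2⟩ := wl_spec h g₂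
  have : wordLength S ((l1 ++ l2).prod) ≤ (l1 ++ l2).length := by
    apply wl_le
    intro x hx; rcases List.mem_append.1 hx with hh|hh
    exacts [h1 x hh, h2 x hh]
  simpa [hp1, hp2, hlen1, hlen2] using this

lemma wl_pow (h : Subgroup.closure S = ⊤) (g : G) (k : ℕ) :
    wordLength S (g ^ k) ≤ k * wordLength S g := by
  induction k with
  | zero =>
      have : wordLength S (([] : List G).prod) ≤ 0 := wl_le (by simp)
      simpa using this
  | succ k ih =>
      calc wordLength S (g ^ (k+1)) = wordLength S (g ^ k * g) := by rw [pow_succ]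
        _ ≤ wordLength S (g ^ k) + wordLength S g := wl_mul h _ _
        _ ≤ k * wordLength S g + wordLength S g := by omega
        _ = (k+1) * wordLength S g := by ring

/-! ### Growth of integer solutions of `u (k+2) = 3 u (k+1) - u k` -/

lemma rec_growth (u : ℕ → ℤ) (hrec : ∀ k, u (k+2) = 3 * u (k+1) - u k) (h0 : u 0 ≠ 0) :
    ∃ K : ℕ, (∀ j : ℕ, (2:ℤ)^j ≤ |u (K+j)|) ∧ (∀ j : ℕ, 2 * |u (K+j)| ≤ |u (K+j+1)|) := by
  have hpair : ∀ k, u k ≠ 0 ∨ u (k+1) ≠ 0 := by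
    intro k
    induction k with
    | zero => exact Or.inl h0
    | succ k ih =>
        by_cases h : u (k+1) = 0
        · right
          rcases ih with hk | hk
          · rw [hrec k, h]; simpa using hk
          · exact absurd h hk
        · left; exact h
  have hturn : ∃ K, |u K| ≤ |u (K+1)| ∧ u (K+1) ≠ 0 := by
    by_contra hc
    push_neg at hc
    have hdec : ∀ k, (u (k+1)).natAbs < (u k).natAbs := by
      intro k
      by_cases h : u (k+1) = 0
      · exfalso
        have hk : u k ≠ 0 := by rcases hpair k with hh|hh; exacts [hh, absurd h hh]
        have h2 : u (k+2) = - u k := by rw [hrec k, h]; ring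
        have h3 : |u (k+1)| ≤ |u (k+2)| := by rw [h, h2]; simp
        have := hc (k+1) h3
        rw [h2] at this
        exact hk (by linarith)
      · have h2 : ¬ (|u k| ≤ |u (k+1)|) := fun hh => h (hc k hh)
        push_neg at h2
        rw [Int.abs_eq_natAbs, Int.abs_eq_natAbs] at h2
        exact_mod_cast h2
    have hle : ∀ n, (u n).natAbs + n ≤ (u 0).natAbs := by
      intro n
      induction n with
      | zero => omega
      | succ n ih => have := hdec n; omega
    have := hle ((u 0).natAbs + 1)
    omega
  obtain ⟨K, hK1, hK2⟩ := hturn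
  have hK2' : (1:ℤ) ≤ |u (K+1)| := by
    have := abs_pos.mpr hK2; linarith
  have main : ∀ j, ((2:ℤ)^j ≤ |u (K+1+j)| ∧ |u (K+j)| ≤ |u (K+1+j)|) := by
    intro j
    induction j with
    | zero => exact ⟨by simpa using hK2', by simpa using hK1⟩
    | succ j ih =>
        obtain ⟨ih1, ih2⟩ := ih
        have heq : u (K+1+(j+1)) = 3 * u (K+1+j) - u (K+j) := by
          have := hrec (K+j)
          have e1 : K+j+2 = K+1+(j+1) := by ring
          have e2 : K+j+1 = K+1+j := by ring
          rw [e1, e2] at this; exact this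
        have habs : 2 * |u (K+1+j)| ≤ |u (K+1+(j+1))| := by
          rw [heq]
          have hA : |3 * u (K+1+j)| - |u (K+j)| ≤ |3 * u (K+1+j) - u (K+j)| :=
            abs_sub_abs_le_abs_sub _ _
          have h3 : |3 * u (K+1+j)| = 3 * |u (K+1+j)| := by rw [abs_mul]; norm_num
          linarith
        have hp : (0:ℤ) < 2^j := by positivity
        refine ⟨?_, ?_⟩
        case _ =>
          have : (2:ℤ)^(j+1) = 2 * 2^j := by ring
          rw [this]; linarith
        case _ =>
          have e : K+(j+1) = K+1+j := by ring
          rw [e]; have := abs_nonneg (u (K+1+j)); linarith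
  refine ⟨K+1, fun j => (main j).1, fun j => ?_⟩
  have heq : u (K+1+(j+1)) = 3 * u (K+1+j) - u (K+j) := by
    have := hrec (K+j)
    have e1 : K+j+2 = K+1+(j+1) := by ring
    have e2 : K+j+1 = K+1+j := by ring
    rw [e1, e2] at this; exact this
  have habs : 2 * |u (K+1+j)| ≤ |u (K+1+(j+1))| := by
    rw [heq]
    have hA : |3 * u (K+1+j)| - |u (K+j)| ≤ |3 * u (K+1+j) - u (K+j)| := abs_sub_abs_le_abs_sub _ _
    have h3 : |3 * u (K+1+j)| = 3 * |u (K+1+j)| := by rw [abs_mul]; norm_num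
    have := (main j).2
    linarith
  have e : K+1+j+1 = K+1+(j+1) := by ring
  rw [e]; exact habs

/-! ### Concrete matrices -/

open Matrix

abbrev Mat3 := Matrix (Fin 3) (Fin 3) ℤ

def Mel : SL3 := ⟨!![2,1,0;1,1,0;0,0,1], by decide⟩
def MelInv : SL3 := ⟨!![1,-1,0;-1,2,0;0,0,1], by decide⟩
def E13 : SL3 := ⟨!![1,0,1;0,1,0;0,0,1], by decide⟩
def E13i : SL3 := ⟨!![1,0,-1;0,1,0;0,0,1], by decide⟩
def E23 : SL3 := ⟨!![1,0,0;0,1,1;0,0,1], by decide⟩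
def E23i : SL3 := ⟨!![1,0,0;0,1,-1;0,0,1], by decide⟩

lemma Mel_inv : Mel⁻¹ = MelInv := by
  apply inv_eq_of_mul_eq_one_right
  apply Subtype.ext
  show (Mel : Mat3) * (MelInv : Mat3) = 1
  simp only [Mel, MelInv]; decide

lemma E13_inv : E13⁻¹ = E13i := by
  apply inv_eq_of_mul_eq_one_right
  apply Subtype.ext
  show (E13 : Mat3) * (E13i : Mat3) = 1
  simp only [E13, E13i]; decide

lemma E23_inv : E23⁻¹ = E23i := by
  apply inv_eq_of_mul_eq_one_right
  apply Subtype.ext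
  show (E23 : Mat3) * (E23i : Mat3) = 1
  simp only [E23, E23i]; decide

lemma step20 (y : SL3) : (↑(MelInv * y * Mel) : Mat3) 2 0
    = 2 * (y : Mat3) 2 0 + (y : Mat3) 2 1 := by
  rw [Matrix.SpecialLinearGroup.coe_mul, Matrix.SpecialLinearGroup.coe_mul]
  simp [Matrix.SpecialLinearGroup.coe_mul, Mel, MelInv, Matrix.mul_apply, Fin.sum_univ_three,
    Matrix.vecMul, dotProduct, Matrix.cons_val_zero, Matrix.cons_val_one,
    Matrix.cons_val_two, Matrix.head_cons, Matrix.vecHead, Matrix.vecTail] <;> ring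

lemma step21 (y : SL3) : (↑(MelInv * y * Mel) : Mat3) 2 1
    = (y : Mat3) 2 0 + (y : Mat3) 2 1 := by
  rw [Matrix.SpecialLinearGroup.coe_mul, Matrix.SpecialLinearGroup.coe_mul]
  simp [Matrix.SpecialLinearGroup.coe_mul, Mel, MelInv, Matrix.mul_apply, Fin.sum_univ_three,
    Matrix.vecMul, dotProduct, Matrix.cons_val_zero, Matrix.cons_val_one,
    Matrix.cons_val_two, Matrix.head_cons, Matrix.vecHead, Matrix.vecTail] <;> ring

lemma step02 (y : SL3) : (↑(MelInv * y * Mel) : Mat3) 0 2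
    = (y : Mat3) 0 2 - (y : Mat3) 1 2 := by
  rw [Matrix.SpecialLinearGroup.coe_mul, Matrix.SpecialLinearGroup.coe_mul]
  simp [Matrix.SpecialLinearGroup.coe_mul, Mel, MelInv, Matrix.mul_apply, Fin.sum_univ_three,
    Matrix.vecMul, dotProduct, Matrix.cons_val_zero, Matrix.cons_val_one,
    Matrix.cons_val_two, Matrix.head_cons, Matrix.vecHead, Matrix.vecTail] <;> ring

lemma step12 (y : SL3) : (↑(MelInv * y * Mel) : Mat3) 1 2
    = -(y : Mat3) 0 2 + 2 * (y : Mat3) 1 2 := by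
  rw [Matrix.SpecialLinearGroup.coe_mul, Matrix.SpecialLinearGroup.coe_mul]
  simp [Matrix.SpecialLinearGroup.coe_mul, Mel, MelInv, Matrix.mul_apply, Fin.sum_univ_three,
    Matrix.vecMul, dotProduct, Matrix.cons_val_zero, Matrix.cons_val_one,
    Matrix.cons_val_two, Matrix.head_cons, Matrix.vecHead, Matrix.vecTail] <;> ring

lemma conj_eq (u : SL3) (g : SL3) (k : ℕ) :
    (u * Mel ^ k)⁻¹ * g * (u * Mel ^ k) = MelInv ^ k * (u⁻¹ * g * u) * Mel ^ k := by
  rw [← Mel_inv, inv_pow]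
  group

lemma D_succ (g' : SL3) (k : ℕ) :
    MelInv ^ (k+1) * g' * Mel ^ (k+1) = MelInv * (MelInv ^ k * g' * Mel ^ k) * Mel := by
  rw [pow_succ Mel, pow_succ' MelInv]
  simp [mul_assoc]

lemma cube_one {t : ℤ} (h : t * (t * t) = 1) : t = 1 := by
  nlinarith [sq_nonneg t, sq_nonneg (t-1), sq_nonneg (t+1)]

lemma exists_conj_offdiag (g : SL3) (hg : g ≠ 1) :
    ∃ u : SL3, (u = 1 ∨ u = E13 ∨ u = E23) ∧
      ((↑(u⁻¹ * g * u) : Mat3) 2 0 ≠ 0 ∨ (↑(u⁻¹ * g * u) : Mat3) 2 1 ≠ 0 ∨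
       (↑(u⁻¹ * g * u) : Mat3) 0 2 ≠ 0 ∨ (↑(u⁻¹ * g * u) : Mat3) 1 2 ≠ 0) := by
  by_contra hcon
  push_neg at hcon
  obtain ⟨h1a, h1b, h1c, h1d⟩ := (hcon 1 (Or.inl rfl))
  simp only [inv_one, one_mul, mul_one] at h1a h1b h1c h1d
  obtain ⟨h2a, h2b, h2c, h2d⟩ := (hcon E13 (Or.inr (Or.inl rfl)))
  obtain ⟨h3a, h3b, h3c, h3d⟩ := (hcon E23 (Or.inr (Or.inr rfl)))
  rw [E13_inv] at h2a h2b h2c h2d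
  rw [E23_inv] at h3a h3b h3c h3d
  rw [Matrix.SpecialLinearGroup.coe_mul, Matrix.SpecialLinearGroup.coe_mul] at h2a h2b h2c h2d h3a h3b h3c h3d
  simp [Matrix.SpecialLinearGroup.coe_mul, E13, E13i, E23, E23i,
    Matrix.mul_apply, Fin.sum_univ_three, Matrix.vecMul, dotProduct,
    Matrix.cons_val_zero, Matrix.cons_val_one, Matrix.cons_val_two, Matrix.head_cons,
    Matrix.vecHead, Matrix.vecTail] at h2a h2b h2c h2d h3a h3b h3c h3d
  ring_nf at h2a h2b h2c h2d h3a h3b h3c h3d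
  have hdet := g.2
  rw [Matrix.det_fin_three] at hdet
  apply hg
  apply Subtype.ext
  have e00 : (g : Mat3) 0 0 = (g : Mat3) 2 2 := by linarith
  have e11 : (g : Mat3) 1 1 = (g : Mat3) 2 2 := by linarith
  have e10 : (g : Mat3) 1 0 = 0 := by linarith
  have e01 : (g : Mat3) 0 1 = 0 := by linarith
  have ht : (g : Mat3) 2 2 = 1 := by
    apply cube_one
    rw [e00, e11, e10, e01, h1a, h1b, h1c, h1d] at hdet
    linarith [hdet]
  show (g : Mat3) = 1
  ext i j
  fin_cases i <;> fin_cases j <;>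
    simp [Matrix.one_apply, e00, e11, e10, e01, h1a, h1b, h1c, h1d, ht]

lemma growth_master (g : SL3) (hg : g ≠ 1) :
    ∃ u : SL3, ∃ i j : Fin 3, ∃ K : ℕ,
      (∀ m : ℕ, (2:ℤ) ^ m ≤ |(↑(MelInv ^ (K+m) * (u⁻¹ * g * u) * Mel ^ (K+m)) : Mat3) i j|) ∧
      (∀ m : ℕ, 2 * |(↑(MelInv ^ (K+m) * (u⁻¹ * g * u) * Mel ^ (K+m)) : Mat3) i j| ≤
            |(↑(MelInv ^ (K+m+1) * (u⁻¹ * g * u) * Mel ^ (K+m+1)) : Mat3) i j|) := by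
  obtain ⟨u, -, hoff⟩ := exists_conj_offdiag g hg
  set g' := u⁻¹ * g * u with hg'
  set D : ℕ → SL3 := fun k => MelInv ^ k * g' * Mel ^ k with hD
  have hD0 : D 0 = g' := by simp [hD]
  have hDs : ∀ k, D (k+1) = MelInv * D k * Mel := fun k => D_succ g' k
  rcases hoff with h | h | h | h
  · refine ⟨u, 2, 0, ?_⟩
    have hrec : ∀ k, (↑(D (k+2)) : Mat3) 2 0 = 3 * (↑(D (k+1)) : Mat3) 2 0 - (↑(D k) : Mat3) 2 0 := by
      intro k
      have e1 : (↑(D (k+1)) : Mat3) 2 0 = 2 * (↑(D k) : Mat3) 2 0 + (↑(D k) : Mat3) 2 1 := by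
        rw [hDs k]; exact step20 (D k)
      have e1' : (↑(D (k+1)) : Mat3) 2 1 = (↑(D k) : Mat3) 2 0 + (↑(D k) : Mat3) 2 1 := by
        rw [hDs k]; exact step21 (D k)
      have e2 : (↑(D (k+2)) : Mat3) 2 0 = 2 * (↑(D (k+1)) : Mat3) 2 0 + (↑(D (k+1)) : Mat3) 2 1 := by
        rw [hDs (k+1)]; exact step20 (D (k+1))
      rw [e2, e1', e1]; ring
    obtain ⟨K, hK1, hK2⟩ := rec_growth (fun k => (↑(D k) : Mat3) 2 0) hrec (by simpa [hD0] using h)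
    exact ⟨K, hK1, hK2⟩
  · refine ⟨u, 2, 1, ?_⟩
    have hrec : ∀ k, (↑(D (k+2)) : Mat3) 2 1 = 3 * (↑(D (k+1)) : Mat3) 2 1 - (↑(D k) : Mat3) 2 1 := by
      intro k
      have e1 : (↑(D (k+1)) : Mat3) 2 0 = 2 * (↑(D k) : Mat3) 2 0 + (↑(D k) : Mat3) 2 1 := by
        rw [hDs k]; exact step20 (D k)
      have e1' : (↑(D (k+1)) : Mat3) 2 1 = (↑(D k) : Mat3) 2 0 + (↑(D k) : Mat3) 2 1 := by
        rw [hDs k]; exact step21 (D k)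
      have e2 : (↑(D (k+2)) : Mat3) 2 1 = (↑(D (k+1)) : Mat3) 2 0 + (↑(D (k+1)) : Mat3) 2 1 := by
        rw [hDs (k+1)]; exact step21 (D (k+1))
      rw [e2, e1', e1]; ring
    obtain ⟨K, hK1, hK2⟩ := rec_growth (fun k => (↑(D k) : Mat3) 2 1) hrec (by simpa [hD0] using h)
    exact ⟨K, hK1, hK2⟩
  · refine ⟨u, 0, 2, ?_⟩
    have hrec : ∀ k, (↑(D (k+2)) : Mat3) 0 2 = 3 * (↑(D (k+1)) : Mat3) 0 2 - (↑(D k) : Mat3) 0 2 := by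
      intro k
      have e1 : (↑(D (k+1)) : Mat3) 0 2 = (↑(D k) : Mat3) 0 2 - (↑(D k) : Mat3) 1 2 := by
        rw [hDs k]; exact step02 (D k)
      have e1' : (↑(D (k+1)) : Mat3) 1 2 = -(↑(D k) : Mat3) 0 2 + 2 * (↑(D k) : Mat3) 1 2 := by
        rw [hDs k]; exact step12 (D k)
      have e2 : (↑(D (k+2)) : Mat3) 0 2 = (↑(D (k+1)) : Mat3) 0 2 - (↑(D (k+1)) : Mat3) 1 2 := by
        rw [hDs (k+1)]; exact step02 (D (k+1))
      rw [e2, e1', e1]; ring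
    obtain ⟨K, hK1, hK2⟩ := rec_growth (fun k => (↑(D k) : Mat3) 0 2) hrec (by simpa [hD0] using h)
    exact ⟨K, hK1, hK2⟩
  · refine ⟨u, 1, 2, ?_⟩
    have hrec : ∀ k, (↑(D (k+2)) : Mat3) 1 2 = 3 * (↑(D (k+1)) : Mat3) 1 2 - (↑(D k) : Mat3) 1 2 := by
      intro k
      have e1 : (↑(D (k+1)) : Mat3) 0 2 = (↑(D k) : Mat3) 0 2 - (↑(D k) : Mat3) 1 2 := by
        rw [hDs k]; exact step02 (D k)
      have e1' : (↑(D (k+1)) : Mat3) 1 2 = -(↑(D k) : Mat3) 0 2 + 2 * (↑(D k) : Mat3) 1 2 := by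
        rw [hDs k]; exact step12 (D k)
      have e2 : (↑(D (k+2)) : Mat3) 1 2 = -(↑(D (k+1)) : Mat3) 0 2 + 2 * (↑(D (k+1)) : Mat3) 1 2 := by
        rw [hDs (k+1)]; exact step12 (D (k+1))
      rw [e2, e1', e1]; ring
    obtain ⟨K, hK1, hK2⟩ := rec_growth (fun k => (↑(D k) : Mat3) 1 2) hrec (by simpa [hD0] using h)
    exact ⟨K, hK1, hK2⟩

/-! ### Entry-size bounds -/

def nent (A : Mat3) : ℕ := Finset.univ.sup fun p : Fin 3 × Fin 3 => (A p.1 p.2).natAbs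

lemma natAbs_entry_le (A : Mat3) (i j : Fin 3) : (A i j).natAbs ≤ nent A :=
  Finset.le_sup (f := fun p : Fin 3 × Fin 3 => (A p.1 p.2).natAbs) (Finset.mem_univ (i, j))

lemma nent_le {A : Mat3} {c : ℕ} (h : ∀ i j, (A i j).natAbs ≤ c) : nent A ≤ c :=
  Finset.sup_le fun p _ => h p.1 p.2

lemma nent_one : nent (1 : Mat3) ≤ 1 := by
  apply nent_le
  intro i j
  fin_cases i <;> fin_cases j <;> simp [Matrix.one_apply]

lemma nent_mul (A B : Mat3) : nent (A * B) ≤ 3 * (nent A * nent B) := by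
  apply nent_le
  intro i j
  have he : (A * B) i j = A i 0 * B 0 j + A i 1 * B 1 j + A i 2 * B 2 j := by
    simp [Matrix.mul_apply, Fin.sum_univ_three]
  have h1 : ∀ k : Fin 3, (A i k * B k j).natAbs ≤ nent A * nent B := fun k => by
    rw [Int.natAbs_mul]
    exact Nat.mul_le_mul (natAbs_entry_le A i k) (natAbs_entry_le B k j)
  calc ((A * B) i j).natAbs
      ≤ (A i 0 * B 0 j).natAbs + (A i 1 * B 1 j).natAbs + (A i 2 * B 2 j).natAbs := by
        rw [he]
        calc (A i 0 * B 0 j + A i 1 * B 1 j + A i 2 * B 2 j).natAbs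
            ≤ (A i 0 * B 0 j + A i 1 * B 1 j).natAbs + (A i 2 * B 2 j).natAbs :=
              Int.natAbs_add_le _ _
          _ ≤ (A i 0 * B 0 j).natAbs + (A i 1 * B 1 j).natAbs + (A i 2 * B 2 j).natAbs := by
              have := Int.natAbs_add_le (A i 0 * B 0 j) (A i 1 * B 1 j); omega
    _ ≤ 3 * (nent A * nent B) := by have := h1 0; have := h1 1; have := h1 2; omega

lemma nent_prod {S : Set SL3} {C : ℕ}
    (hC : ∀ x : SL3, (x ∈ S ∨ x⁻¹ ∈ S) → nent ↑x ≤ C) :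
    ∀ l : List SL3, (∀ x ∈ l, x ∈ S ∨ x⁻¹ ∈ S) → nent ↑l.prod ≤ (3 * C) ^ l.length := by
  intro l
  induction l with
  | nil => intro _; simpa using nent_one
  | cons a t ih =>
      intro hmem
      have ha : nent ↑a ≤ C := hC a (hmem a List.mem_cons_self)
      have ht : nent ↑t.prod ≤ (3 * C) ^ t.length := ih fun x hx => hmem x (List.mem_cons_of_mem a hx)
      have hco : (↑((a :: t).prod) : Mat3) = (↑a : Mat3) * (↑t.prod : Mat3) := by
        rw [List.prod_cons]; exact Matrix.SpecialLinearGroup.coe_mul a t.prod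
      rw [hco]
      calc nent ((↑a : Mat3) * ↑t.prod) ≤ 3 * (nent ↑a * nent ↑t.prod) := nent_mul _ _
        _ ≤ 3 * (C * (3 * C) ^ t.length) := Nat.mul_le_mul_left 3 (Nat.mul_le_mul ha ht)
        _ = (3 * C) ^ (a :: t).length := by
            simp [List.length_cons, pow_succ]; ring

end SL3aux

/-- For `G = SL(3,ℤ)`: the kernel of the natural action of `G` on every asymptotic cone is
trivial, every nonidentity element has an infinite conjugacy class (`FC(G) = 1`), and `G`
has no nontrivial finite normal subgroup (`K(G) = 1`). -/
theorem coneKernel_FC_K_trivial_SL3 :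
    (∀ S : Set SL3, S.Finite → Subgroup.closure S = ⊤ →
      ∀ (ω : Ultrafilter ℕ), (∀ A ∈ ω, A.Infinite) →
        ∀ d : ℕ → ℝ, (∀ n, 0 < d n) → Monotone d → (∀ B : ℝ, ∃ n, B < d n) →
          ∀ g : SL3, g ≠ 1 →
            ∃ x : ℕ → SL3,
              (∃ B : ℝ, ∀ n, (wordLength S (x n) : ℝ) / d n ≤ B) ∧
              ¬ Tendsto (fun n => (wordLength S ((x n)⁻¹ * g * x n) : ℝ) / d n)
                  (ω : Filter ℕ) (nhds 0)) ∧
    (∀ g : SL3, g ≠ 1 → Set.Infinite {h : SL3 | ∃ x : SL3, x⁻¹ * g * x = h}) ∧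
    (∀ K : Subgroup SL3, K.Normal → (K : Set SL3).Finite → K = ⊥) := by
  have FC : ∀ g : SL3, g ≠ 1 → Set.Infinite {h : SL3 | ∃ x : SL3, x⁻¹ * g * x = h} := by
    intro g hg
    obtain ⟨u, i, j, K, hK1, hK2⟩ := SL3aux.growth_master g hg
    set e : ℕ → ℤ := fun m =>
      (↑(SL3aux.MelInv ^ (K+m) * (u⁻¹ * g * u) * SL3aux.Mel ^ (K+m)) : SL3aux.Mat3) i j with he
    have hmono : StrictMono (fun m => |e m|) := by
      apply strictMono_nat_of_lt_succ
      intro m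
      have h1 := hK1 m
      have h2 := hK2 m
      have hp : (0:ℤ) < 2^m := by positivity
      have h3 : e (m+1) =
          (↑(SL3aux.MelInv ^ (K+m+1) * (u⁻¹ * g * u) * SL3aux.Mel ^ (K+m+1)) : SL3aux.Mat3) i j := rfl
      show |e m| < |e (m+1)|
      rw [h3]
      have h4 : |e m| =
          |(↑(SL3aux.MelInv ^ (K+m) * (u⁻¹ * g * u) * SL3aux.Mel ^ (K+m)) : SL3aux.Mat3) i j| := rfl
      rw [h4]
      linarith
    apply Set.infinite_of_injective_forall_mem
      (f := fun m : ℕ => SL3aux.MelInv ^ (K+m) * (u⁻¹ * g * u) * SL3aux.Mel ^ (K+m))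
    · intro m1 m2 hEq
      apply hmono.injective
      show |e m1| = |e m2|
      have : e m1 = e m2 := by
        simp only [he]
        have hEq' : SL3aux.MelInv ^ (K + m1) * (u⁻¹ * g * u) * SL3aux.Mel ^ (K + m1)
            = SL3aux.MelInv ^ (K + m2) * (u⁻¹ * g * u) * SL3aux.Mel ^ (K + m2) := hEq
        rw [hEq']
      rw [this]
    · intro m
      exact ⟨u * SL3aux.Mel ^ (K+m), (SL3aux.conj_eq u g (K+m))⟩
  have K3 : ∀ K : Subgroup SL3, K.Normal → (K : Set SL3).Finite → K = ⊥ := by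
    intro K hN hfin
    rw [Subgroup.eq_bot_iff_forall]
    intro x hx
    by_contra hx1
    apply FC x hx1
    apply hfin.subset
    intro h hh
    obtain ⟨y, rfl⟩ := hh
    have := hN.conj_mem x hx y⁻¹
    simpa using this
  refine ⟨?_, FC, K3⟩
  intro S hS hgen ω hω d hdpos hdmono hdunb g hg
  obtain ⟨u, i, j, K, hK1, hK2⟩ := SL3aux.growth_master g hg
  set T := hS.toFinset with hT
  set C : ℕ := 1 + T.sup (fun s => max (SL3aux.nent ↑s) (SL3aux.nent ↑(s⁻¹))) with hCdef
  have hCbound : ∀ x : SL3, (x ∈ S ∨ x⁻¹ ∈ S) → SL3aux.nent ↑x ≤ C := by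
    intro x hx
    rcases hx with hx | hx
    · have hmem : x ∈ T := hS.mem_toFinset.2 hx
      have hs : max (SL3aux.nent (↑x : SL3aux.Mat3)) (SL3aux.nent ↑(x⁻¹))
          ≤ T.sup (fun s => max (SL3aux.nent ↑s) (SL3aux.nent ↑(s⁻¹))) := by
        simpa using Finset.le_sup
          (f := fun s : SL3 => max (SL3aux.nent ↑s) (SL3aux.nent ↑(s⁻¹))) hmem
      have h1 : SL3aux.nent (↑x : SL3aux.Mat3) ≤
          max (SL3aux.nent (↑x : SL3aux.Mat3)) (SL3aux.nent ↑(x⁻¹)) := le_max_left _ _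
      have h2 := le_trans h1 hs
      omega
    · have hmem : x⁻¹ ∈ T := hS.mem_toFinset.2 hx
      have hs : max (SL3aux.nent (↑(x⁻¹) : SL3aux.Mat3)) (SL3aux.nent ↑((x⁻¹)⁻¹))
          ≤ T.sup (fun s => max (SL3aux.nent ↑s) (SL3aux.nent ↑(s⁻¹))) := by
        simpa using Finset.le_sup
          (f := fun s : SL3 => max (SL3aux.nent ↑s) (SL3aux.nent ↑(s⁻¹))) hmem
      have h1 : SL3aux.nent (↑x : SL3aux.Mat3) ≤
          max (SL3aux.nent (↑(x⁻¹) : SL3aux.Mat3)) (SL3aux.nent ↑((x⁻¹)⁻¹)) := by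
        rw [inv_inv]; exact le_max_right _ _
      have h2 := le_trans h1 hs
      omega
  have hwl_nent : ∀ y : SL3, SL3aux.nent ↑y ≤ (3*C) ^ (wordLength S y) := by
    intro y
    obtain ⟨l, hl, hlen, hp⟩ := SL3aux.wl_spec hgen y
    have h := SL3aux.nent_prod hCbound l hl
    rw [hlen, hp] at h
    exact h
  set c0 : ℕ := 3*C with hc0def
  have hc0pos : 0 < c0 := by omega
  have h3C : 3*C ≤ 2 ^ c0 := le_of_lt (Nat.lt_two_pow_self (n := c0))
  set kf : ℕ → ℕ := fun n => ⌈d n⌉₊ with hkf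
  set x : ℕ → SL3 := fun n => u * SL3aux.Mel ^ (kf n) with hxdef
  have hd0 : 0 < d 0 := hdpos 0
  refine ⟨x, ⟨((wordLength S u + wordLength S SL3aux.Mel : ℕ) : ℝ) / d 0
      + (wordLength S SL3aux.Mel : ℝ), ?_⟩, ?_⟩
  · intro n
    have hdn : 0 < d n := hdpos n
    have hd0n : d 0 ≤ d n := hdmono (Nat.zero_le n)
    have hkd : (kf n : ℝ) < d n + 1 := Nat.ceil_lt_add_one (le_of_lt hdn)
    have hwl : wordLength S (x n) ≤ wordLength S u + kf n * wordLength S SL3aux.Mel := by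
      calc wordLength S (x n)
          ≤ wordLength S u + wordLength S (SL3aux.Mel ^ kf n) := SL3aux.wl_mul hgen _ _
        _ ≤ wordLength S u + kf n * wordLength S SL3aux.Mel := by
            have := SL3aux.wl_pow hgen SL3aux.Mel (kf n); omega
    have hwl' : (wordLength S (x n) : ℝ)
        ≤ (wordLength S u : ℝ) + (kf n : ℝ) * (wordLength S SL3aux.Mel : ℝ) := by
      exact_mod_cast hwl
    set wu : ℝ := (wordLength S u : ℝ) with hwu
    set wM : ℝ := (wordLength S SL3aux.Mel : ℝ) with hwM
    have hwMpos : 0 ≤ wM := by positivity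
    have hq : (wu + wM) / d 0 * d 0 = wu + wM := div_mul_cancel₀ _ (ne_of_gt hd0)
    have hmul : (wu + wM) / d 0 * d 0 ≤ (wu + wM) / d 0 * d n := by
      apply mul_le_mul_of_nonneg_left hd0n
      positivity
    have h5 : (kf n : ℝ) * wM ≤ (d n + 1) * wM :=
      mul_le_mul_of_nonneg_right (le_of_lt hkd) hwMpos
    rw [div_le_iff₀ hdn]
    have hcast : ((wordLength S u + wordLength S SL3aux.Mel : ℕ) : ℝ) = wu + wM := by
      push_cast; rfl
    rw [hcast]
    nlinarith
  · intro hT2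
    have hc0posR : (0:ℝ) < (c0:ℝ) := by exact_mod_cast hc0pos
    have hεpos : (0:ℝ) < 1/(2*(c0:ℝ)) := by positivity
    obtain ⟨N, hN⟩ := hdunb (2*K + 1 : ℝ)
    have hA : {n : ℕ | N ≤ n} ∈ ω := by
      by_contra hA
      have hcm := (Ultrafilter.compl_mem_iff_notMem).2 hA
      have hfin : ({n : ℕ | N ≤ n}ᶜ : Set ℕ).Finite := by
        apply Set.Finite.subset (Set.finite_Iio N)
        intro m hm
        simp only [Set.mem_compl_iff, Set.mem_setOf_eq, not_le] at hm
        exact hm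
      exact (hω _ hcm) hfin
    have hB : ∀ n, N ≤ n → 1/(2*(c0:ℝ)) ≤ (wordLength S ((x n)⁻¹ * g * x n) : ℝ) / d n := by
      intro n hn
      have hdn := hdpos n
      have hdN : (2*K+1 : ℝ) ≤ d n := le_trans (le_of_lt hN) (hdmono hn)
      have hkge : 2*K+1 ≤ kf n := by
        have h1 : ((2*K+1 : ℕ):ℝ) ≤ (kf n : ℝ) := by
          push_cast
          calc ((2*(K:ℝ))+1) ≤ d n := hdN
            _ ≤ (kf n : ℝ) := Nat.le_ceil _
        exact_mod_cast h1
      set m := kf n - K with hm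
      have hKm : K + m = kf n := by omega
      have hgrow := hK1 m
      rw [hKm] at hgrow
      have hcj : (x n)⁻¹ * g * (x n)
          = SL3aux.MelInv ^ (kf n) * (u⁻¹ * g * u) * SL3aux.Mel ^ (kf n) :=
        SL3aux.conj_eq u g (kf n)
      have hent : 2^m ≤ ((↑((x n)⁻¹ * g * (x n)) : SL3aux.Mat3) i j).natAbs := by
        rw [hcj]
        rw [Int.abs_eq_natAbs] at hgrow
        exact_mod_cast hgrow
      have hn1 : ((↑((x n)⁻¹ * g * (x n)) : SL3aux.Mat3) i j).natAbs
          ≤ SL3aux.nent ↑((x n)⁻¹ * g * (x n)) := SL3aux.natAbs_entry_le _ i j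
      have hn2 : SL3aux.nent (↑((x n)⁻¹ * g * (x n)) : SL3aux.Mat3)
          ≤ (3*C) ^ wordLength S ((x n)⁻¹ * g * (x n)) := hwl_nent _
      have hn3 : (3*C) ^ wordLength S ((x n)⁻¹ * g * (x n))
          ≤ (2^c0) ^ wordLength S ((x n)⁻¹ * g * (x n)) := Nat.pow_le_pow_left h3C _
      have hchain : 2^m ≤ 2^(c0 * wordLength S ((x n)⁻¹ * g * (x n))) := by
        rw [pow_mul]
        omega
      have hmw : m ≤ c0 * wordLength S ((x n)⁻¹ * g * (x n)) :=
        (Nat.pow_le_pow_iff_right one_lt_two).1 hchain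
      have hwreal : ((m:ℕ):ℝ) ≤ (c0:ℝ) * (wordLength S ((x n)⁻¹ * g * (x n)) : ℝ) := by
        exact_mod_cast hmw
      have hmge : (d n)/2 ≤ ((m:ℕ):ℝ) := by
        have hKk : K ≤ kf n := by omega
        have h1 : ((m:ℕ):ℝ) = (kf n : ℝ) - (K:ℝ) := by
          rw [hm]
          push_cast [Nat.cast_sub hKk]
          ring
        have h2 : d n ≤ (kf n : ℝ) := Nat.le_ceil _
        have h3 : (K:ℝ) ≤ (d n - 1)/2 := by linarith
        linarith
      rw [le_div_iff₀ hdn]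
      have hkey : d n ≤ 2*(c0:ℝ)*(wordLength S ((x n)⁻¹ * g * (x n)) : ℝ) := by linarith
      calc 1/(2*(c0:ℝ)) * d n
          ≤ 1/(2*(c0:ℝ)) * (2*(c0:ℝ)*(wordLength S ((x n)⁻¹ * g * (x n)) : ℝ)) := by
            apply mul_le_mul_of_nonneg_left hkey
            positivity
        _ = (wordLength S ((x n)⁻¹ * g * (x n)) : ℝ) := by field_simp
    have hlt : {n : ℕ | (wordLength S ((x n)⁻¹ * g * x n) : ℝ) / d n < 1/(2*(c0:ℝ))} ∈ ω :=
      hT2 (Iio_mem_nhds hεpos)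
    have hint := Filter.inter_mem hA hlt
    obtain ⟨n, hn1, hn2⟩ := Filter.nonempty_of_mem hint
    exact absurd hn2 (not_lt.2 (hB n hn1))
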